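/- Let $r$ be an odd positive integer with $r \le m$. Then any linear subspace $A \subseteq S^2(\mathbb{C}^m)$ (symmetric $m\times m$ complex matrices) with the property that every nonzero element of $A$ has rank exactly $r$ satisfies $\dim A \le 1$. -/

import Mathlib

open Polynomial Matrix

namespace ConstantOddRank

/-- coefficient of `t^card s` in a product of linear polynomials. -/
lemma coeff_card_prod {ι : Type*} [DecidableEq ι] (s : Finset ι) (a b : ι → ℂ) :
    ((∏ i ∈ s, (C (a i) + X * C (b i))).natDegree ≤ s.card) ∧
    ((∏ i ∈ s, (C (a i) + X * C (b i))).coeff s.card = ∏ i ∈ s, b i) := by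
  induction s using Finset.induction_on with
  | empty => simp
  | insert _ _ h ih =>
    rename_i x s
    rw [Finset.prod_insert h, Finset.prod_insert h, Finset.card_insert_of_notMem h]
    constructor
    · refine (natDegree_mul_le).trans ?_
      have h1 : (C (a x) + X * C (b x)).natDegree ≤ 1 := by
        refine (natDegree_add_le _ _).trans ?_
        simp only [natDegree_C, max_le_iff]
        refine ⟨Nat.zero_le _, (natDegree_mul_le).trans ?_⟩
        simp
      omega
    · have expand : (C (a x) + X * C (b x)) * ∏ i ∈ s, (C (a i) + X * C (b i)) =
          C (a x) * ∏ i ∈ s, (C (a i) + X * C (b i)) +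
            X * (C (b x) * ∏ i ∈ s, (C (a i) + X * C (b i))) := by ring
      rw [expand, coeff_add, coeff_C_mul, coeff_X_mul, coeff_C_mul,
        coeff_eq_zero_of_natDegree_lt (lt_of_le_of_lt ih.1 (Nat.lt_succ_self _)), ih.2]
      ring

/-- Bound and top coefficient for determinants of a linear pencil. -/
lemma det_pencil_coeff {k : ℕ} (a b : Matrix (Fin k) (Fin k) ℂ) :
    ((Matrix.of fun i j => C (a i j) + X * C (b i j)).det.natDegree ≤ k) ∧
    ((Matrix.of fun i j => C (a i j) + X * C (b i j)).det.coeff k = b.det) := by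
  rw [Matrix.det_apply', Matrix.det_apply']
  constructor
  · refine natDegree_sum_le_of_forall_le _ _ fun σ _ => ?_
    refine (natDegree_mul_le).trans ?_
    rw [natDegree_intCast]
    have h1 := (coeff_card_prod (Finset.univ : Finset (Fin k))
      (fun i => a (σ i) i) (fun i => b (σ i) i)).1
    simp only [Finset.card_univ, Fintype.card_fin] at h1
    simpa using h1
  · rw [finset_sum_coeff]
    refine Finset.sum_congr rfl fun σ _ => ?_
    have h2 := (coeff_card_prod (Finset.univ : Finset (Fin k))
      (fun i => a (σ i) i) (fun i => b (σ i) i)).2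
    simp only [Finset.card_univ, Fintype.card_fin] at h2
    simp only [Matrix.of_apply]
    rw [← C_eq_intCast, coeff_C_mul, h2]

/-- From a spanning family of columns one can select an invertible square submatrix. -/
lemma exists_col_det_ne_zero {r m : ℕ} (B : Matrix (Fin r) (Fin m) ℂ) (hB : B.rank = r) :
    ∃ g : Fin r → Fin m, (B.submatrix id g).det ≠ 0 := by
  classical
  have hspan : Submodule.span ℂ (Set.range Bᵀ) = ⊤ := by
    apply Submodule.eq_top_of_finrank_eq
    exact (Matrix.rank_eq_finrank_span_cols B).symm.trans (by rw [hB, Module.finrank_pi, Fintype.card_fin])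
  obtain ⟨c, hc_sub, hc_span, hc_li⟩ := exists_linearIndependent ℂ (Set.range Bᵀ)
  have hfin : c.Finite := (Set.finite_range Bᵀ).subset hc_sub
  haveI : Fintype c := hfin.fintype
  have hcard : c.toFinset.card = r := by
    have h1 := finrank_span_set_eq_card hc_li
    rw [hc_span, hspan, finrank_top, Module.finrank_pi, Fintype.card_fin] at h1
    omega
  let e : c.toFinset ≃ Fin r := c.toFinset.equivFinOfCardEq hcard
  have hmemc : ∀ k : Fin r, ((e.symm k : Fin r → ℂ)) ∈ c :=
    fun k => Set.mem_toFinset.mp (e.symm k).2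
  have hmemrange : ∀ k : Fin r, ((e.symm k : Fin r → ℂ)) ∈ Set.range Bᵀ :=
    fun k => hc_sub (hmemc k)
  choose g hg using hmemrange
  refine ⟨g, ?_⟩
  set w : Fin r → c := fun k => ⟨(e.symm k : Fin r → ℂ), hmemc k⟩ with hw
  have hwinj : Function.Injective w := by
    intro k k' hkk'
    have h1 : (e.symm k : Fin r → ℂ) = (e.symm k' : Fin r → ℂ) := congrArg (fun x : c => (x : Fin r → ℂ)) hkk'
    have h2 : e.symm k = e.symm k' := Subtype.ext h1
    simpa using congrArg e h2
  have hcols : LinearIndependent ℂ (fun k : Fin r => (B.submatrix id g)ᵀ k) := by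
    have hli2 := hc_li.comp w hwinj
    have heqf : (fun k : Fin r => (B.submatrix id g)ᵀ k) =
        fun k : Fin r => ((w k : Fin r → ℂ)) := by
      funext k
      have := hg k
      funext i
      have h3 := congrFun this i
      simpa [Matrix.transpose_apply, Matrix.submatrix_apply, hw] using h3
    rw [heqf]
    exact hli2
  have := Matrix.linearIndependent_cols_iff_isUnit.mp hcols
  have hdet := (Matrix.isUnit_iff_isUnit_det _).mp this
  exact hdet.ne_zero

/-- Rank factorization of a rank-`r` matrix. -/
lemma exists_rank_fact {m r : ℕ} (N : Matrix (Fin m) (Fin m) ℂ) (h : N.rank = r) :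
    ∃ (A : Matrix (Fin m) (Fin r) ℂ) (B : Matrix (Fin r) (Fin m) ℂ), N = A * B := by
  classical
  have h' : Module.finrank ℂ (LinearMap.range N.mulVecLin) = r := h
  let b : Module.Basis (Fin r) ℂ (LinearMap.range N.mulVecLin) := Module.finBasisOfFinrankEq ℂ _ h'
  have hmem : ∀ j, N.mulVec (Pi.single j 1) ∈ LinearMap.range N.mulVecLin :=
    fun j => ⟨Pi.single j 1, rfl⟩
  refine ⟨Matrix.of (fun i k => (b k : Fin m → ℂ) i),
          Matrix.of (fun k j => b.repr ⟨N.mulVec (Pi.single j 1), hmem j⟩ k), ?_⟩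
  ext i j
  have hc : (∑ k, b.repr ⟨N.mulVec (Pi.single j 1), hmem j⟩ k • b k) =
      (⟨N.mulVec (Pi.single j 1), hmem j⟩ : LinearMap.range N.mulVecLin) := b.sum_repr _
  have h2 := congrArg (fun v : LinearMap.range N.mulVecLin => (v : Fin m → ℂ) i) hc
  simp only [AddSubmonoidClass.coe_finset_sum, SetLike.val_smul, Finset.sum_apply,
    Pi.smul_apply, smul_eq_mul] at h2
  have h3 : N.mulVec (Pi.single j 1) i = N i j := by
    simp [Matrix.mulVec_single]
  rw [h3] at h2
  rw [Matrix.mul_apply]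
  rw [← h2]
  refine Finset.sum_congr rfl fun k _ => ?_
  simp [mul_comm]

/-- All `r`-minors of a rank-`r` matrix factor as a product, with nonzero witnesses. -/
lemma minor_factorization {m r : ℕ} (N : Matrix (Fin m) (Fin m) ℂ) (h : N.rank = r) :
    ∃ (u w : (Fin r → Fin m) → ℂ),
      (∀ f g, (N.submatrix f g).det = u f * w g) ∧ (∃ f, u f ≠ 0) ∧ (∃ g, w g ≠ 0) := by
  obtain ⟨A, B, hAB⟩ := exists_rank_fact N h
  have hrA : A.rank = r := by
    have h1 : N.rank ≤ A.rank := hAB ▸ Matrix.rank_mul_le_left A B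
    have h2 : A.rank ≤ r := by
      simpa using A.rank_le_card_width
    omega
  have hrB : B.rank = r := by
    have h1 : N.rank ≤ B.rank := hAB ▸ Matrix.rank_mul_le_right A B
    have h2 : B.rank ≤ r := by
      simpa using B.rank_le_card_height
    omega
  refine ⟨fun f => (A.submatrix f id).det, fun g => (B.submatrix id g).det, ?_, ?_, ?_⟩
  · intro f g
    have hsub : N.submatrix f g = A.submatrix f id * B.submatrix id g := by
      rw [hAB]
      exact Matrix.submatrix_mul A B f id g Function.bijective_id
    rw [hsub, Matrix.det_mul]
  · have hAt : Aᵀ.rank = r := by rw [Matrix.rank_transpose]; exact hrA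
    obtain ⟨f, hf⟩ := exists_col_det_ne_zero Aᵀ hAt
    refine ⟨f, ?_⟩
    have : Aᵀ.submatrix id f = (A.submatrix f id)ᵀ := by
      rw [Matrix.transpose_submatrix]
    rw [this, Matrix.det_transpose] at hf
    exact hf
  · exact exists_col_det_ne_zero B hrB

end ConstantOddRank

/-- A linear space of symmetric `m × m` complex matrices of constant odd rank `r`
(every nonzero element has rank exactly `r`) has dimension at most `1`. -/
theorem constant_odd_rank_dim_le_one
    {m r : ℕ} (hodd : Odd r) (hrpos : 0 < r) (hrm : r ≤ m)
    (A : Submodule ℂ (Matrix (Fin m) (Fin m) ℂ))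
    (hsym : ∀ M ∈ A, M.transpose = M)
    (hrank : ∀ M ∈ A, M ≠ 0 → M.rank = r) :
    Module.finrank ℂ A ≤ 1 := by
  classical
  by_contra hcon
  push_neg at hcon
  obtain ⟨v, hv⟩ := exists_linearIndependent_of_le_finrank (R := ℂ) (M := A)
    (n := 2) (by omega)
  have hli : LinearIndependent ℂ (fun i : Fin 2 => ((v i : A) : Matrix (Fin m) (Fin m) ℂ)) :=
    hv.map' A.subtype (Submodule.ker_subtype A)
  set M₀ : Matrix (Fin m) (Fin m) ℂ := ((v 0 : A) : Matrix (Fin m) (Fin m) ℂ) with hM₀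
  set M₁ : Matrix (Fin m) (Fin m) ℂ := ((v 1 : A) : Matrix (Fin m) (Fin m) ℂ) with hM₁
  have hmem : ∀ t : ℂ, M₀ + t • M₁ ∈ A := fun t =>
    A.add_mem (v 0).2 (A.smul_mem t (v 1).2)
  have hne : ∀ t : ℂ, M₀ + t • M₁ ≠ 0 := by
    intro t h0
    have := Fintype.linearIndependent_iff.mp hli ![1, t] (by
      simpa [Fin.sum_univ_two, ← hM₀, ← hM₁] using h0) 0
    simp at this
  have hM₁ne : M₁ ≠ 0 := hli.ne_zero 1
  have hr : ∀ t : ℂ, (M₀ + t • M₁).rank = r := fun t => hrank _ (hmem t) (hne t)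
  have hrY : M₁.rank = r := hrank _ (v 1).2 hM₁ne
  -- the polynomial pencil
  set Mp : Matrix (Fin m) (Fin m) ℂ[X] :=
    Matrix.of (fun i j => C (M₀ i j) + X * C (M₁ i j)) with hMp
  set P : (Fin r → Fin m) → (Fin r → Fin m) → ℂ[X] :=
    fun f g => (Mp.submatrix f g).det with hP
  -- evaluation of the minors
  have heval : ∀ (t : ℂ) (f g : Fin r → Fin m),
      (P f g).eval t = (((M₀ + t • M₁)).submatrix f g).det := by
    intro t f g
    have hmap : (Mp.submatrix f g).map (Polynomial.evalRingHom t) =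
        (M₀ + t • M₁).submatrix f g := by
      ext i j
      simp only [hMp, Matrix.map_apply, Matrix.submatrix_apply, Matrix.add_apply,
        Matrix.smul_apply, Matrix.of_apply, coe_evalRingHom, eval_add, eval_mul, eval_C, eval_X,
        smul_eq_mul]
    calc (P f g).eval t = (Polynomial.evalRingHom t) (Mp.submatrix f g).det := rfl
      _ = ((Mp.submatrix f g).map (Polynomial.evalRingHom t)).det :=
          RingHom.map_det (Polynomial.evalRingHom t) _
      _ = _ := by rw [hmap]
  -- symmetry
  have hsymP : ∀ f g, P f g = P g f := by
    intro f g
    have h0 : M₀ᵀ = M₀ := hsym _ (v 0).2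
    have h1 : M₁ᵀ = M₁ := hsym _ (v 1).2
    have hMpt : Mpᵀ = Mp := by
      refine Matrix.ext fun i j => ?_
      have e0 : M₀ j i = M₀ i j := congrFun (congrFun h0 i) j
      have e1 : M₁ j i = M₁ i j := congrFun (congrFun h1 i) j
      show C (M₀ j i) + X * C (M₁ j i) = C (M₀ i j) + X * C (M₁ i j)
      rw [e0, e1]
    calc P f g = (Mp.submatrix f g).det := rfl
      _ = ((Mp.submatrix f g)ᵀ).det := (Matrix.det_transpose _).symm
      _ = (Mpᵀ.submatrix g f).det := by rw [Matrix.transpose_submatrix]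
      _ = P g f := by rw [hMpt]
  -- rank-one identities
  have hP1 : ∀ f g f' g', P f g * P f' g' = P f g' * P f' g := by
    intro f g f' g'
    apply Polynomial.funext
    intro t
    obtain ⟨u, w, huw, -, -⟩ := ConstantOddRank.minor_factorization (M₀ + t • M₁) (hr t)
    simp only [eval_mul, heval, huw]
    ring
  -- no common root
  have hnv : ∀ t : ℂ, ∃ f g, (P f g).eval t ≠ 0 := by
    intro t
    obtain ⟨u, w, huw, ⟨f, hf⟩, ⟨g, hg⟩⟩ :=
      ConstantOddRank.minor_factorization (M₀ + t • M₁) (hr t)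
    exact ⟨f, g, by rw [heval, huw]; exact mul_ne_zero hf hg⟩
  -- degree bound and top coefficient
  have hsubeq : ∀ f g : Fin r → Fin m, Mp.submatrix f g =
      Matrix.of (fun i j => C ((M₀.submatrix f g) i j) + X * C ((M₁.submatrix f g) i j)) :=
    fun f g => Matrix.ext fun i j => rfl
  have hPeq : ∀ f g : Fin r → Fin m, P f g =
      (Matrix.of (fun i j => C ((M₀.submatrix f g) i j) + X * C ((M₁.submatrix f g) i j))).det :=
    fun f g => congrArg Matrix.det (hsubeq f g)
  have hdeg : ∀ f g, (P f g).natDegree ≤ r := by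
    intro f g
    rw [hPeq f g]
    exact (ConstantOddRank.det_pencil_coeff (M₀.submatrix f g) (M₁.submatrix f g)).1
  have hcoeff : ∀ f g, (P f g).coeff r = (M₁.submatrix f g).det := by
    intro f g
    rw [hPeq f g]
    exact (ConstantOddRank.det_pencil_coeff (M₀.submatrix f g) (M₁.submatrix f g)).2
  -- a minor of maximal degree r
  obtain ⟨u, w, huw, ⟨f₀, hf₀⟩, ⟨g₀, hg₀⟩⟩ := ConstantOddRank.minor_factorization M₁ hrY
  have hP0 : (P f₀ g₀).coeff r ≠ 0 := by
    rw [hcoeff, huw f₀ g₀]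
    exact mul_ne_zero hf₀ hg₀
  have hdeg0 : (P f₀ g₀).natDegree = r :=
    le_antisymm (hdeg f₀ g₀) (le_natDegree_of_ne_zero hP0)
  have hP0ne : P f₀ g₀ ≠ 0 := fun h => hP0 (by simp [h])
  -- the diagonal minor P f₀ f₀ has degree r
  have hsq : ∀ f g, P f f * P g g = (P f g) ^ 2 := by
    intro f g
    rw [hP1 f f g g, hsymP g f]
    ring
  have hQR : P f₀ f₀ * P g₀ g₀ = (P f₀ g₀) ^ 2 := hsq f₀ g₀
  have hQRne : P f₀ f₀ * P g₀ g₀ ≠ 0 := by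
    rw [hQR]
    exact pow_ne_zero 2 hP0ne
  have hQne : P f₀ f₀ ≠ 0 := left_ne_zero_of_mul hQRne
  have hRne : P g₀ g₀ ≠ 0 := right_ne_zero_of_mul hQRne
  have hdegQ : (P f₀ f₀).natDegree = r := by
    have h1 : (P f₀ f₀).natDegree + (P g₀ g₀).natDegree = 2 * r := by
      have := congrArg Polynomial.natDegree hQR
      rw [Polynomial.natDegree_mul hQne hRne, Polynomial.natDegree_pow, hdeg0] at this
      omega
    have h2 := hdeg f₀ f₀
    have h3 := hdeg g₀ g₀
    omega
  -- every root of P f₀ f₀ has even multiplicity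
  have hevenmult : ∀ t : ℂ, Even ((P f₀ f₀).rootMultiplicity t) := by
    intro t
    obtain ⟨f1, g1, hne1⟩ := hnv t
    have hd1 : (P f1 f1).eval t ≠ 0 := by
      intro h0
      have := hsq f1 g1
      have heq := congrArg (Polynomial.eval t) this
      simp only [eval_mul, eval_pow, h0, zero_mul] at heq
      exact hne1 (pow_eq_zero_iff (by norm_num) |>.mp heq.symm)
    have hid : P f₀ f₀ * P f1 f1 = (P f₀ f1) ^ 2 := hsq f₀ f1
    have hne2 : P f₀ f₀ * P f1 f1 ≠ 0 :=
      mul_ne_zero hQne (fun h => hd1 (by simp [h]))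
    have hPf01ne : P f₀ f1 ≠ 0 := by
      intro h
      rw [h] at hid
      simp only [ne_eq, hid] at hne2
      exact hne2 (by ring)
    have hmul := Polynomial.rootMultiplicity_mul (x := t) hne2
    rw [hid] at hmul
    have hpow : ((P f₀ f1) ^ 2).rootMultiplicity t = 2 * (P f₀ f1).rootMultiplicity t := by
      rw [sq]
      rw [Polynomial.rootMultiplicity_mul (mul_ne_zero hPf01ne hPf01ne)]
      ring
    rw [hpow] at hmul
    have hzero : (P f1 f1).rootMultiplicity t = 0 :=
      Polynomial.rootMultiplicity_eq_zero hd1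
    rw [hzero] at hmul
    exact ⟨(P f₀ f1).rootMultiplicity t, by omega⟩
  -- hence its degree is even
  have hevendeg : Even ((P f₀ f₀).natDegree) := by
    have hsplits : ((P f₀ f₀).roots).card = (P f₀ f₀).natDegree :=
      Polynomial.splits_iff_card_roots.mp (IsAlgClosed.splits _)
    rw [← hsplits, ← Multiset.toFinset_sum_count_eq]
    refine Finset.sum_induction _ Even (fun a b ha hb => ha.add hb) Even.zero ?_
    intro a _
    rw [Polynomial.count_roots]
    exact hevenmult a
  rw [hdegQ] at hevendeg
  exact (Nat.not_even_iff_odd.mpr hodd) hevendeg
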